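/- Let α > 2 and c > 0 be real numbers and define f(s) = (c s)^{2/α} γ(1 − 2/α, c s) for s > 0. Then f is twice differentiable on (0, ∞), and its second derivative f″(s) tends to −α c²/(α − 1) as s → 0⁺. (This is equation (VG2) in Appendix E, used to compute the variance of the received power from the Laplace transform.) -/

import Mathlib

open Real intervalIntegral Filter Set MeasureTheory

/-- The lower incomplete gamma function γ(s, x) = ∫_0^x t^(s-1) e^(-t) dt. -/
noncomputable def lowerGamma (s x : ℝ) : ℝ := ∫ t in (0:ℝ)..x, t ^ (s - 1) * Real.exp (-t)

/-- f(s) = (c s)^(2/α) · γ(1 − 2/α, c s). -/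
noncomputable def f (c α s : ℝ) : ℝ := (c * s) ^ (2/α) * lowerGamma (1 - 2/α) (c * s)

lemma integ_aux {p : ℝ} (hp : -1 < p) (x : ℝ) :
    IntervalIntegrable (fun t => t ^ p * Real.exp (-t)) MeasureTheory.volume 0 x :=
  (intervalIntegral.intervalIntegrable_rpow' hp).mul_continuousOn
    (Continuous.continuousOn (by continuity))

lemma hasDerivAt_lowerGamma {a x : ℝ} (ha1 : a < 1) (hx : 0 < x) :
    HasDerivAt (lowerGamma (1 - a)) (x ^ (-a) * Real.exp (-x)) x := by
  have hca : ∀ y ∈ Set.Ioi (0:ℝ), ContinuousAt (fun t : ℝ => t ^ (-a) * Real.exp (-t)) y := by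
    intro y hy
    exact ((Real.continuousAt_rpow_const y (-a) (Or.inl (ne_of_gt hy))).comp continuousAt_id).mul
      (by fun_prop : ContinuousAt (fun t : ℝ => Real.exp (-t)) y)
  have hmeas : StronglyMeasurableAtFilter (fun t : ℝ => t ^ (-a) * Real.exp (-t)) (nhds x) :=
    ContinuousAt.stronglyMeasurableAtFilter isOpen_Ioi hca x hx
  have := intervalIntegral.integral_hasDerivAt_right (integ_aux (by linarith) x) hmeas (hca x hx)
  have he : (1 : ℝ) - a - 1 = -a := by ring
  unfold lowerGamma
  rw [he]
  exact this

noncomputable def gg (a x : ℝ) : ℝ := x ^ a * lowerGamma (1 - a) x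
noncomputable def gg' (a x : ℝ) : ℝ :=
  a * x ^ (a - 1) * lowerGamma (1 - a) x + Real.exp (-x)
noncomputable def gg'' (a x : ℝ) : ℝ :=
  a * (a - 1) * x ^ (a - 2) * lowerGamma (1 - a) x + a * Real.exp (-x) / x - Real.exp (-x)

lemma hasDerivAt_gg {a x : ℝ} (ha1 : a < 1) (hx : 0 < x) :
    HasDerivAt (gg a) (gg' a x) x := by
  have h1 : HasDerivAt (fun y : ℝ => y ^ a) (a * x ^ (a - 1)) x := by
    simpa using Real.hasDerivAt_rpow_const (p := a) (Or.inl hx.ne')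
  have h2 := hasDerivAt_lowerGamma ha1 hx
  have := h1.mul h2
  unfold gg gg'
  refine this.congr_deriv ?_
  have hxa : x ^ a * x ^ (-a) = 1 := by
    rw [← Real.rpow_add hx]; simp
  rw [← mul_assoc, hxa, one_mul]

lemma hasDerivAt_gg' {a x : ℝ} (ha1 : a < 1) (hx : 0 < x) :
    HasDerivAt (gg' a) (gg'' a x) x := by
  have h1 : HasDerivAt (fun y : ℝ => a * y ^ (a - 1)) (a * ((a - 1) * x ^ (a - 2))) x := by
    have := (Real.hasDerivAt_rpow_const (p := a - 1) (Or.inl hx.ne')).const_mul a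
    refine this.congr_deriv ?_
    ring_nf
  have h2 := hasDerivAt_lowerGamma ha1 hx
  have h3 : HasDerivAt (fun y : ℝ => Real.exp (-y)) (-Real.exp (-x)) x := by
    simpa [Function.comp_def] using (Real.hasDerivAt_exp (-x)).comp x (hasDerivAt_neg x)
  have := (h1.mul h2).add h3
  unfold gg' gg''
  refine this.congr_deriv ?_
  have hxa : x ^ (a - 1) * x ^ (-a) = 1 / x := by
    rw [← Real.rpow_add hx, show a - 1 + -a = -1 by ring, Real.rpow_neg_one, one_div]
  have h4 : a * x ^ (a - 1) * (x ^ (-a) * Real.exp (-x))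
      = a * Real.exp (-x) / x := by
    rw [show a * x ^ (a-1) * (x ^ (-a) * Real.exp (-x))
        = (x ^ (a-1) * x ^ (-a)) * (a * Real.exp (-x)) by ring, hxa]
    ring
  rw [h4]
  ring

/-- The difference as an integral. -/
lemma lowerGamma_sub {a x : ℝ} (ha0 : 0 < a) (ha1 : a < 1) (hx : 0 < x) :
    lowerGamma (1 - a) x - x ^ (1 - a) / (1 - a)
      = ∫ t in (0:ℝ)..x, t ^ (-a) * (Real.exp (-t) - 1) := by
  have hI : ∫ t in (0:ℝ)..x, t ^ (-a) = x ^ (1 - a) / (1 - a) := by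
    rw [integral_rpow (Or.inl (by linarith))]
    rw [Real.zero_rpow (by linarith : -a + 1 ≠ 0)]
    ring_nf
  have h1 : IntervalIntegrable (fun t : ℝ => t ^ (-a) * Real.exp (-t))
      MeasureTheory.volume 0 x := integ_aux (by linarith) x
  have h2 : IntervalIntegrable (fun t : ℝ => t ^ (-a)) MeasureTheory.volume 0 x :=
    intervalIntegral.intervalIntegrable_rpow' (by linarith)
  have := intervalIntegral.integral_sub h1 h2
  unfold lowerGamma
  rw [show (1:ℝ) - a - 1 = -a by ring, ← hI, ← this]
  congr 1
  ext t
  ring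

lemma D_bounds {a x : ℝ} (ha0 : 0 < a) (ha1 : a < 1) (hx : 0 < x) (hx1 : x ≤ 1) :
    -x ^ (2 - a) / (2 - a) ≤ (∫ t in (0:ℝ)..x, t ^ (-a) * (Real.exp (-t) - 1)) ∧
    (∫ t in (0:ℝ)..x, t ^ (-a) * (Real.exp (-t) - 1))
      ≤ x ^ (3 - a) / (3 - a) - x ^ (2 - a) / (2 - a) := by
  have hmid : IntervalIntegrable (fun t : ℝ => t ^ (-a) * (Real.exp (-t) - 1))
      MeasureTheory.volume 0 x :=
    (intervalIntegral.intervalIntegrable_rpow' (by linarith)).mul_continuousOn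
      (Continuous.continuousOn (by continuity))
  have hlo : IntervalIntegrable (fun t : ℝ => -t ^ (1 - a)) MeasureTheory.volume 0 x :=
    (intervalIntegral.intervalIntegrable_rpow' (by linarith)).neg
  have hhi : IntervalIntegrable (fun t : ℝ => t ^ (2 - a) - t ^ (1 - a))
      MeasureTheory.volume 0 x :=
    (intervalIntegral.intervalIntegrable_rpow' (by linarith)).sub
      (intervalIntegral.intervalIntegrable_rpow' (by linarith))
  constructor
  · have hle : ∀ t ∈ Set.Icc (0:ℝ) x, -t ^ (1 - a) ≤ t ^ (-a) * (Real.exp (-t) - 1) := by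
      intro t ht
      rcases eq_or_lt_of_le ht.1 with h0 | h0
      · rw [← h0, Real.zero_rpow (by linarith : (1:ℝ) - a ≠ 0),
          Real.zero_rpow (by linarith : -a ≠ 0)]
        simp
      · have h1 : Real.exp (-t) - 1 ≥ -t := by
          have := Real.add_one_le_exp (-t); linarith
        have h2 : t ^ (-a) * (Real.exp (-t) - 1) ≥ t ^ (-a) * (-t) :=
          mul_le_mul_of_nonneg_left h1 (Real.rpow_nonneg ht.1 _)
        have h3 : t ^ (-a) * (-t) = -t ^ (1 - a) := by
          rw [show (1:ℝ) - a = -a + 1 by ring, Real.rpow_add_one h0.ne']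
          ring
        linarith [h3 ▸ h2]
    have := intervalIntegral.integral_mono_on hx.le hlo hmid hle
    have hval : (∫ t in (0:ℝ)..x, -t ^ (1 - a)) = -x ^ (2 - a) / (2 - a) := by
      rw [intervalIntegral.integral_neg, integral_rpow (Or.inl (by linarith))]
      rw [Real.zero_rpow (by linarith : (1:ℝ) - a + 1 ≠ 0)]
      rw [show (1:ℝ) - a + 1 = 2 - a by ring]
      ring
    linarith [hval ▸ this]
  · have hle : ∀ t ∈ Set.Icc (0:ℝ) x,
        t ^ (-a) * (Real.exp (-t) - 1) ≤ t ^ (2 - a) - t ^ (1 - a) := by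
      intro t ht
      rcases eq_or_lt_of_le ht.1 with h0 | h0
      · rw [← h0, Real.zero_rpow (by linarith : (1:ℝ) - a ≠ 0),
          Real.zero_rpow (by linarith : (2:ℝ) - a ≠ 0),
          Real.zero_rpow (by linarith : -a ≠ 0)]
        simp
      · have habs : |Real.exp (-t) - 1 - (-t)| ≤ (-t) ^ 2 := by
          apply Real.abs_exp_sub_one_sub_id_le
          rw [abs_neg, abs_of_pos h0]; linarith [ht.2]
        have h1 : Real.exp (-t) - 1 ≤ -t + t ^ 2 := by
          have := abs_le.1 habs; nlinarith [this.2]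
        have h2 : t ^ (-a) * (Real.exp (-t) - 1) ≤ t ^ (-a) * (-t + t ^ 2) :=
          mul_le_mul_of_nonneg_left h1 (Real.rpow_nonneg ht.1 _)
        have h3 : t ^ (-a) * (-t + t ^ 2) = t ^ (2 - a) - t ^ (1 - a) := by
          have e1 : t ^ ((1:ℝ) - a) = t ^ (-a) * t := by
            rw [show (1:ℝ) - a = -a + 1 by ring, Real.rpow_add_one h0.ne']
          have e2 : t ^ ((2:ℝ) - a) = t ^ (-a) * t * t := by
            rw [show (2:ℝ) - a = -a + 1 + 1 by ring, Real.rpow_add_one h0.ne',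
              Real.rpow_add_one h0.ne']
          rw [e1, e2]; ring
        linarith [h3 ▸ h2]
    have := intervalIntegral.integral_mono_on hx.le hmid hhi hle
    have hval : (∫ t in (0:ℝ)..x, (t ^ (2 - a) - t ^ (1 - a)))
        = x ^ (3 - a) / (3 - a) - x ^ (2 - a) / (2 - a) := by
      rw [intervalIntegral.integral_sub
        (intervalIntegral.intervalIntegrable_rpow' (by linarith))
        (intervalIntegral.intervalIntegrable_rpow' (by linarith)),
        integral_rpow (Or.inl (by linarith)), integral_rpow (Or.inl (by linarith)),
        Real.zero_rpow (by linarith : (2:ℝ) - a + 1 ≠ 0),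
        Real.zero_rpow (by linarith : (1:ℝ) - a + 1 ≠ 0),
        show (2:ℝ) - a + 1 = 3 - a by ring, show (1:ℝ) - a + 1 = 2 - a by ring]
      ring
    linarith [hval ▸ this]

noncomputable def HH (a x : ℝ) : ℝ :=
  x ^ (a - 2) * lowerGamma (1 - a) x - 1 / ((1 - a) * x)

lemma tendsto_HH {a : ℝ} (ha0 : 0 < a) (ha1 : a < 1) :
    Tendsto (HH a) (nhdsWithin 0 (Set.Ioi 0)) (nhds (-(1 / (2 - a)))) := by
  have key : ∀ x ∈ Set.Ioo (0:ℝ) 1,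
      -(1 / (2 - a)) ≤ HH a x ∧ HH a x ≤ x / (3 - a) - 1 / (2 - a) := by
    intro x hx
    have hx0 : (0:ℝ) < x := hx.1
    have hD := D_bounds ha0 ha1 hx0 hx.2.le
    have hH : HH a x = x ^ (a - 2) * (lowerGamma (1 - a) x - x ^ (1 - a) / (1 - a)) := by
      unfold HH
      have : x ^ (a - 2) * (x ^ ((1:ℝ) - a) / (1 - a)) = 1 / ((1 - a) * x) := by
        rw [div_eq_mul_inv, ← mul_assoc, ← Real.rpow_add hx0,
          show a - 2 + (1 - a) = -1 by ring, Real.rpow_neg_one]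
        field_simp
      rw [mul_sub, this]
    have hpos : (0:ℝ) < x ^ (a - 2) := Real.rpow_pos_of_pos hx0 _
    have e2 : x ^ (a - 2) * x ^ ((2:ℝ) - a) = 1 := by
      rw [← Real.rpow_add hx0]; norm_num
    have e3 : x ^ (a - 2) * x ^ ((3:ℝ) - a) = x := by
      rw [← Real.rpow_add hx0, show a - 2 + (3 - a) = 1 by ring, Real.rpow_one]
    constructor
    · have := mul_le_mul_of_nonneg_left hD.1 hpos.le
      rw [hH, lowerGamma_sub ha0 ha1 hx0]
      calc -(1/(2-a)) = x ^ (a-2) * (-x ^ ((2:ℝ)-a) / (2-a)) := by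
            rw [div_eq_mul_inv, div_eq_mul_inv]
            rw [show x ^ (a-2) * (-x ^ ((2:ℝ)-a) * (2-a)⁻¹)
               = -(x ^ (a-2) * x ^ ((2:ℝ)-a)) * (2-a)⁻¹ by ring, e2]
            ring
        _ ≤ _ := this
    · have := mul_le_mul_of_nonneg_left hD.2 hpos.le
      rw [hH, lowerGamma_sub ha0 ha1 hx0]
      calc x ^ (a-2) * (∫ t in (0:ℝ)..x, t ^ (-a) * (Real.exp (-t) - 1))
          ≤ x ^ (a-2) * (x ^ ((3:ℝ)-a) / (3-a) - x ^ ((2:ℝ)-a) / (2-a)) := this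
        _ = x / (3-a) - 1 / (2-a) := by
            rw [mul_sub, div_eq_mul_inv, div_eq_mul_inv, ← mul_assoc, ← mul_assoc, e2, e3]
            ring
  have hmem : ∀ᶠ x in nhdsWithin (0:ℝ) (Set.Ioi 0), x ∈ Set.Ioo (0:ℝ) 1 := by
    filter_upwards [self_mem_nhdsWithin,
      eventually_nhdsWithin_of_eventually_nhds (eventually_lt_nhds one_pos)] with x h1 h2
    exact ⟨h1, h2⟩
  apply tendsto_of_tendsto_of_tendsto_of_le_of_le' (g := fun _ => -(1/(2-a)))
    (h := fun x => x / (3 - a) - 1 / (2 - a))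
  · exact tendsto_const_nhds
  · have : Tendsto (fun x : ℝ => x / (3-a) - 1/(2-a)) (nhds 0)
        (nhds (0 / (3-a) - 1/(2-a))) := by
      apply Tendsto.sub _ tendsto_const_nhds
      exact (tendsto_id.div_const _)
    rw [zero_div, zero_sub] at this
    exact this.mono_left nhdsWithin_le_nhds
  · filter_upwards [hmem] with x hx using (key x hx).1
  · filter_upwards [hmem] with x hx using (key x hx).2

lemma tendsto_E : Tendsto (fun x : ℝ => (Real.exp (-x) - 1) / x)
    (nhdsWithin 0 (Set.Ioi 0)) (nhds (-1)) := by
  have hd : HasDerivAt (fun y : ℝ => Real.exp (-y)) (-1) 0 := by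
    simpa [Function.comp_def] using (Real.hasDerivAt_exp (-(0:ℝ))).comp 0 (hasDerivAt_neg (0:ℝ))
  have := hasDerivAt_iff_tendsto_slope.1 hd
  have h2 : Tendsto (slope (fun y : ℝ => Real.exp (-y)) 0)
      (nhdsWithin 0 (Set.Ioi 0)) (nhds (-1)) :=
    this.mono_left (nhdsWithin_mono _ (fun x hx => ne_of_gt hx))
  apply h2.congr'
  filter_upwards [self_mem_nhdsWithin] with x hx
  rw [slope_def_field]
  field_simp [ne_of_gt (show (0:ℝ) < x from hx)]
  simp

lemma tendsto_gg'' {a : ℝ} (ha0 : 0 < a) (ha1 : a < 1) :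
    Tendsto (gg'' a) (nhdsWithin 0 (Set.Ioi 0)) (nhds (-2 / (2 - a))) := by
  have hid : ∀ x ∈ Set.Ioi (0:ℝ), gg'' a x
      = a * (a - 1) * HH a x + a * ((Real.exp (-x) - 1) / x) - Real.exp (-x) := by
    intro x hx
    unfold gg'' HH
    have hx0 : x ≠ 0 := ne_of_gt hx
    have h1a : (1:ℝ) - a ≠ 0 := by linarith
    have key : a * (a - 1) * (1 / ((1 - a) * x)) = -(a / x) := by
      field_simp
      ring
    rw [mul_sub (a * (a - 1)) (x ^ (a - 2) * lowerGamma (1 - a) x) (1 / ((1 - a) * x)), key]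
    field_simp
    ring
  have hlim : Tendsto (fun x => a * (a - 1) * HH a x + a * ((Real.exp (-x) - 1) / x)
      - Real.exp (-x)) (nhdsWithin 0 (Set.Ioi 0))
      (nhds (a * (a - 1) * (-(1 / (2 - a))) + a * (-1) - 1)) := by
    have he : Tendsto (fun x : ℝ => Real.exp (-x)) (nhdsWithin 0 (Set.Ioi 0)) (nhds 1) := by
      have : Tendsto (fun x : ℝ => Real.exp (-x)) (nhds 0) (nhds (Real.exp (-0))) :=
        (Real.continuous_exp.comp continuous_neg).tendsto 0
      simpa using this.mono_left nhdsWithin_le_nhds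
    exact ((((tendsto_HH ha0 ha1).const_mul _).add ((tendsto_E).const_mul a)).sub he)
  have hval : a * (a - 1) * (-(1 / (2 - a))) + a * (-1) - 1 = -2 / (2 - a) := by
    have h2a : (2:ℝ) - a ≠ 0 := by linarith
    field_simp
    ring
  rw [← hval]
  apply hlim.congr'
  filter_upwards [self_mem_nhdsWithin] with x hx
  exact (hid x hx).symm



theorem stmt_4 (α c : ℝ) (hα : 2 < α) (hc : 0 < c) :
    (∀ s ∈ Set.Ioi (0:ℝ), DifferentiableAt ℝ (f c α) s) ∧
    (∀ s ∈ Set.Ioi (0:ℝ), DifferentiableAt ℝ (deriv (f c α)) s) ∧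
    Filter.Tendsto (deriv (deriv (f c α))) (nhdsWithin 0 (Set.Ioi 0))
      (nhds (-(α * c ^ 2) / (α - 1))) := by
  have hα0 : (0:ℝ) < α := by linarith
  set a : ℝ := 2 / α with ha_def
  have ha0 : 0 < a := by positivity
  have ha1 : a < 1 := by rw [ha_def, div_lt_one hα0]; linarith
  have hfeq : f c α = fun s => gg a (c * s) := rfl
  have hmul : ∀ s : ℝ, HasDerivAt (fun y : ℝ => c * y) c s := by
    intro s; simpa using (hasDerivAt_id s).const_mul c
  have hD : ∀ s ∈ Set.Ioi (0:ℝ), HasDerivAt (f c α) (gg' a (c * s) * c) s := by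
    intro s hs
    have hcs : 0 < c * s := mul_pos hc hs
    have := (hasDerivAt_gg ha1 hcs).comp s (hmul s)
    rw [hfeq]
    exact this
  have hD2 : ∀ s ∈ Set.Ioi (0:ℝ),
      HasDerivAt (fun u => gg' a (c * u) * c) (gg'' a (c * s) * c * c) s := by
    intro s hs
    have hcs : 0 < c * s := mul_pos hc hs
    exact ((hasDerivAt_gg' ha1 hcs).comp s (hmul s)).mul_const c
  have heq1 : ∀ s ∈ Set.Ioi (0:ℝ),
      deriv (f c α) =ᶠ[nhds s] (fun u => gg' a (c * u) * c) := by
    intro s hs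
    filter_upwards [isOpen_Ioi.mem_nhds hs] with u hu
    exact (hD u hu).deriv
  have hderiv2 : ∀ s ∈ Set.Ioi (0:ℝ),
      deriv (deriv (f c α)) s = gg'' a (c * s) * c * c := by
    intro s hs
    rw [(heq1 s hs).deriv_eq]
    exact (hD2 s hs).deriv
  refine ⟨fun s hs => (hD s hs).differentiableAt, fun s hs => ?_, ?_⟩
  · exact (heq1 s hs).differentiableAt_iff.mpr (hD2 s hs).differentiableAt
  · have hcs_t : Filter.Tendsto (fun s : ℝ => c * s)
        (nhdsWithin 0 (Set.Ioi 0)) (nhdsWithin 0 (Set.Ioi 0)) := by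
      apply tendsto_nhdsWithin_of_tendsto_nhds_of_eventually_within
      · have : Filter.Tendsto (fun s : ℝ => c * s) (nhds 0) (nhds (c * 0)) :=
          (continuous_const.mul continuous_id).tendsto 0
        rw [mul_zero] at this
        exact this.mono_left nhdsWithin_le_nhds
      · filter_upwards [self_mem_nhdsWithin] with s hs using mul_pos hc hs
    have hlim := (((tendsto_gg'' ha0 ha1).comp hcs_t).mul_const c).mul_const c
    have hval : -2 / (2 - a) * c * c = -(α * c ^ 2) / (α - 1) := by
      rw [ha_def]
      have h1 : α - 1 ≠ 0 := by linarith
      have h2 : (2:ℝ) - 2 / α ≠ 0 := by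
        have : 2 / α < 1 := by rw [div_lt_one hα0]; linarith
        linarith
      have key : (-2:ℝ)/(2 - 2/α) = -α/(α-1) := by
        rw [div_eq_div_iff h2 h1]
        field_simp
      rw [key]
      ring
    rw [← hval]
    apply hlim.congr'
    filter_upwards [self_mem_nhdsWithin] with s hs
    exact (hderiv2 s hs).symm
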